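/- Let p be a prime and A a ℤ/pℤ-graded commutative ring with components A_i. The following conditions are equivalent: (1) Σ_{i=1}^{p−1} A_i·A_{p−i} = A_0; (2) A_i^p = A_0 for all i = 1, …, p−1; (3) A_1^p = A_0; (4) A_i·A_{p−i} = A_0 for each i = 1, …, p−1; (5) the multiplication map A_k ⊗_{A_0} A_l → A_{k+l}, a ⊗ b ↦ ab, is bijective for all k, l ∈ ℤ/pℤ. -/

import Mathlib

open scoped TensorProduct

section GradedSetup

variable {A : Type*} [CommRing A] {p : ℕ}
variable (𝒜 : ZMod p → Submodule ℤ A) [GradedRing 𝒜]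

/-- Each component `𝒜 i` is a module over the degree-zero subring `𝒜 0`,
with scalar multiplication induced by the ring multiplication. -/
instance gradeZeroModule (i : ZMod p) : Module (𝒜 (0 : ZMod p)) (𝒜 i) where
  smul r x := ⟨(r : A) * (x : A), by
    have h := SetLike.mul_mem_graded r.2 x.2
    rwa [zero_add] at h⟩
  one_smul x := Subtype.ext (one_mul _)
  mul_smul r s x := Subtype.ext (mul_assoc _ _ _)
  smul_zero r := Subtype.ext (mul_zero _)
  smul_add r x y := Subtype.ext (mul_add _ _ _)
  add_smul r s x := Subtype.ext (add_mul _ _ _)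
  zero_smul x := Subtype.ext (zero_mul _)

/-- The multiplication map `𝒜 k ⊗[𝒜 0] 𝒜 l → 𝒜 (k + l)`, `a ⊗ b ↦ ab`. -/
noncomputable def gradedMulMap (k l : ZMod p) :
    (𝒜 k) ⊗[↥(𝒜 (0 : ZMod p))] (𝒜 l) →ₗ[↥(𝒜 (0 : ZMod p))] (𝒜 (k + l)) :=
  TensorProduct.lift (LinearMap.mk₂ (𝒜 (0 : ZMod p))
    (fun a b => ⟨(a : A) * (b : A), SetLike.mul_mem_graded a.2 b.2⟩)
    (fun _ _ _ => Subtype.ext (add_mul _ _ _))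
    (fun _ _ _ => Subtype.ext (mul_assoc _ _ _))
    (fun _ _ _ => Subtype.ext (mul_add _ _ _))
    (fun _ _ _ => Subtype.ext (mul_left_comm _ _ _)))

end GradedSetup

section Aux
variable {A : Type*} [CommRing A] {p : ℕ}
variable (𝒜 : ZMod p → Submodule ℤ A) [GradedRing 𝒜]

lemma gmul_le (j k : ZMod p) : 𝒜 j * 𝒜 k ≤ 𝒜 (j + k) :=
  Submodule.mul_le.2 fun _ ha _ hb => SetLike.mul_mem_graded ha hb

lemma gone_mem : (1 : A) ∈ 𝒜 (0 : ZMod p) := SetLike.one_mem_graded 𝒜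

lemma gstep {i : ZMod p} (h1 : (1:A) ∈ 𝒜 i * 𝒜 (-i)) (j : ZMod p) :
    𝒜 j * 𝒜 i = 𝒜 (j + i) := by
  refine le_antisymm (gmul_le 𝒜 j i) ?_
  have h1' : (1:A) ∈ 𝒜 (-i) * 𝒜 i := by rwa [mul_comm] at h1
  calc 𝒜 (j + i) = 𝒜 (j+i) * 1 := (mul_one _).symm
    _ ≤ 𝒜 (j+i) * (𝒜 (-i) * 𝒜 i) :=
        mul_le_mul' le_rfl (Submodule.one_le.2 h1')
    _ = (𝒜 (j+i) * 𝒜 (-i)) * 𝒜 i := (mul_assoc _ _ _).symm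
    _ ≤ 𝒜 (j + i + -i) * 𝒜 i := mul_le_mul' (gmul_le 𝒜 _ _) le_rfl
    _ = 𝒜 j * 𝒜 i := by rw [add_neg_cancel_right]

lemma gfull (hp : p.Prime) {i : ZMod p} (hi : i ≠ 0) (h1 : (1:A) ∈ 𝒜 i * 𝒜 (-i))
    (j k : ZMod p) : 𝒜 j * 𝒜 k = 𝒜 (j + k) := by
  haveI : Fact p.Prime := ⟨hp⟩
  have aux : ∀ n : ℕ, ∀ j : ZMod p,
      𝒜 j * 𝒜 (((n+1 : ℕ) : ZMod p) * i) = 𝒜 (j + ((n+1:ℕ) : ZMod p) * i) := by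
    intro n
    induction n with
    | zero => intro j; simpa using gstep 𝒜 h1 j
    | succ n ih =>
      intro j
      have harith : ∀ c : ZMod p, c + ((n+1:ℕ):ZMod p) * i + i = c + ((n+1+1:ℕ):ZMod p) * i := by
        intro c; push_cast; ring
      have hstep : 𝒜 (((n+1:ℕ):ZMod p) * i) * 𝒜 i = 𝒜 (((n+1+1:ℕ):ZMod p) * i) := by
        rw [gstep 𝒜 h1]
        have : ((n+1:ℕ):ZMod p) * i + i = ((n+1+1:ℕ):ZMod p) * i := by push_cast; ring
        rw [this]
      calc 𝒜 j * 𝒜 (((n+1+1:ℕ):ZMod p) * i)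
          = 𝒜 j * (𝒜 (((n+1:ℕ):ZMod p)*i) * 𝒜 i) := by rw [hstep]
        _ = (𝒜 j * 𝒜 (((n+1:ℕ):ZMod p)*i)) * 𝒜 i := (mul_assoc _ _ _).symm
        _ = 𝒜 (j + ((n+1:ℕ):ZMod p)*i) * 𝒜 i := by rw [ih]
        _ = 𝒜 (j + ((n+1:ℕ):ZMod p)*i + i) := gstep 𝒜 h1 _
        _ = 𝒜 (j + ((n+1+1:ℕ):ZMod p)*i) := by rw [harith]
  obtain ⟨n, hn⟩ : ∃ n : ℕ, ((n+1 : ℕ) : ZMod p) * i = k := by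
    by_cases hk : k = 0
    · refine ⟨p - 1, ?_⟩
      have h1 : (p - 1 + 1 : ℕ) = p := Nat.succ_pred_eq_of_pos hp.pos
      rw [h1, ZMod.natCast_self, zero_mul, hk]
    · have hu : k * i⁻¹ ≠ 0 := mul_ne_zero hk (inv_ne_zero hi)
      refine ⟨(k * i⁻¹).val - 1, ?_⟩
      have h1le : 1 ≤ (k * i⁻¹).val :=
        Nat.one_le_iff_ne_zero.2 (by simpa [ZMod.val_eq_zero] using hu)
      rw [Nat.sub_add_cancel h1le, ZMod.natCast_val, ZMod.cast_id, mul_assoc,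
        inv_mul_cancel₀ hi, mul_one]
  rw [← hn]; exact aux n j


-- pow bound (no hypothesis)
lemma gpow_le (j : ZMod p) : ∀ n : ℕ, 𝒜 j ^ (n+1) ≤ 𝒜 (((n+1:ℕ) : ZMod p) * j) := by
  intro n
  induction n with
  | zero => simpa using le_rfl
  | succ n ih =>
    have : 𝒜 j ^ (n+1+1) = 𝒜 j ^ (n+1) * 𝒜 j := pow_succ _ _
    rw [this]
    refine le_trans (mul_le_mul' ih le_rfl) ?_
    refine le_trans (gmul_le 𝒜 _ _) ?_
    have : ((n+1:ℕ):ZMod p) * j + j = ((n+1+1:ℕ):ZMod p) * j := by push_cast; ring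
    rw [this]

-- pow equality given full multiplication
lemma gpow_eq (hfull : ∀ j k : ZMod p, 𝒜 j * 𝒜 k = 𝒜 (j + k)) (j : ZMod p) :
    ∀ n : ℕ, 𝒜 j ^ (n+1) = 𝒜 (((n+1:ℕ) : ZMod p) * j) := by
  intro n
  induction n with
  | zero => simpa using rfl
  | succ n ih =>
    rw [pow_succ, ih, hfull]
    have : ((n+1:ℕ):ZMod p) * j + j = ((n+1+1:ℕ):ZMod p) * j := by push_cast; ring
    rw [this]

-- cast helper
lemma gcast_sub {i : ℕ} (hip : i ≤ p) : (((p - i : ℕ)) : ZMod p) = -(i : ZMod p) := by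
  rw [Nat.cast_sub hip, ZMod.natCast_self, zero_sub]

-- sum of constant 𝒜 0
lemma gsum_const {ι : Type*} (s : Finset ι) (hs : s.Nonempty) :
    ∑ _i ∈ s, 𝒜 (0 : ZMod p) = 𝒜 (0 : ZMod p) := by
  rw [Finset.sum_const]
  have key : ∀ n : ℕ, (n + 1) • 𝒜 (0:ZMod p) = 𝒜 (0:ZMod p) := by
    intro n
    induction n with
    | zero => simp
    | succ n ih => rw [succ_nsmul, ih, Submodule.add_eq_sup, sup_idem]
  obtain ⟨n, hn⟩ := Nat.exists_eq_succ_of_ne_zero (Nat.pos_iff_ne_zero.1 (Finset.card_pos.2 hs))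
  rw [hn, key]


@[simp] lemma coe_gsmul {i : ZMod p} (r : ↥(𝒜 (0:ZMod p))) (x : 𝒜 i) :
    ((r • x : 𝒜 i) : A) = (r : A) * (x : A) := rfl

@[simp] lemma gradedMulMap_tmul (k l : ZMod p) (x : 𝒜 k) (y : 𝒜 l) :
    gradedMulMap 𝒜 k l (x ⊗ₜ y) = ⟨(x:A)*(y:A), SetLike.mul_mem_graded x.2 y.2⟩ := rfl

lemma exists_fin_sum_of_mem_mul {M N : Submodule ℤ A} {x : A} (hx : x ∈ M * N) :
    ∃ (n : ℕ) (a b : Fin n → A), (∀ t, a t ∈ M) ∧ (∀ t, b t ∈ N) ∧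
      x = ∑ t, a t * b t := by
  refine Submodule.mul_induction_on hx ?_ ?_
  · intro m hm n hn
    exact ⟨1, fun _ => m, fun _ => n, fun _ => hm, fun _ => hn, by simp⟩
  · rintro x y ⟨nx, ax, bx, hax, hbx, hxe⟩ ⟨ny, ay, yb, hay, hby, hye⟩
    refine ⟨nx + ny, Fin.append ax ay, Fin.append bx yb, ?_, ?_, ?_⟩
    · intro t
      refine Fin.addCases (fun i => ?_) (fun i => ?_) t <;>
        simp [Fin.append_left, Fin.append_right, hax, hay]
    · intro t
      refine Fin.addCases (fun i => ?_) (fun i => ?_) t <;>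
        simp [Fin.append_left, Fin.append_right, hbx, hby]
    · rw [Fin.sum_univ_add]
      simp only [Fin.append_left, Fin.append_right]
      rw [← hxe, ← hye]

lemma gbij (hfull : ∀ j k : ZMod p, 𝒜 j * 𝒜 k = 𝒜 (j + k)) (k l : ZMod p) :
    Function.Bijective (gradedMulMap 𝒜 k l) := by
  have h1 : (1:A) ∈ 𝒜 (-k) * 𝒜 k := by
    rw [hfull, neg_add_cancel]; exact gone_mem 𝒜
  obtain ⟨n, a, b, ha, hb, hsum⟩ := exists_fin_sum_of_mem_mul h1
  -- a t ∈ 𝒜 (-k), b t ∈ 𝒜 k, 1 = ∑ a t * b t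
  have hmem : ∀ (t : Fin n) (x : 𝒜 (k+l)), a t * (x:A) ∈ 𝒜 l := by
    intro t x
    have := SetLike.mul_mem_graded (ha t) x.2
    rwa [neg_add_cancel_left] at this
  set R := ↥(𝒜 (0 : ZMod p))
  let μ : Fin n → (𝒜 (k+l) →ₗ[R] 𝒜 l) := fun t =>
    { toFun := fun x => ⟨a t * (x:A), hmem t x⟩
      map_add' := fun x y => Subtype.ext (by simp [mul_add])
      map_smul' := fun r x => Subtype.ext (by
        change a t * ((r:A) * (x:A)) = (r:A) * (a t * (x:A))
        ring) }
  let g : 𝒜 (k+l) →ₗ[R] ((𝒜 k) ⊗[R] (𝒜 l)) :=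
    ∑ t, (TensorProduct.mk R (𝒜 k) (𝒜 l) ⟨b t, hb t⟩).comp (μ t)
  have key : ∀ (x : 𝒜 k) (y : 𝒜 l), g (gradedMulMap 𝒜 k l (x ⊗ₜ y)) = x ⊗ₜ y := by
    intro x y
    have hg : g (gradedMulMap 𝒜 k l (x ⊗ₜ y)) =
        ∑ t, (⟨b t, hb t⟩ : 𝒜 k) ⊗ₜ[R] (μ t (gradedMulMap 𝒜 k l (x ⊗ₜ y))) := by
      simp [g, LinearMap.sum_apply]
    rw [hg]
    have hterm : ∀ t : Fin n, (⟨b t, hb t⟩ : 𝒜 k) ⊗ₜ[R] (μ t (gradedMulMap 𝒜 k l (x ⊗ₜ y)))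
        = ((⟨a t * (x:A), by
            have := SetLike.mul_mem_graded (ha t) x.2
            rwa [neg_add_cancel] at this⟩ : R) • (⟨b t, hb t⟩ : 𝒜 k)) ⊗ₜ[R] y := by
      intro t
      rw [TensorProduct.smul_tmul]
      congr 1
      apply Subtype.ext
      simp [μ]
      ring
    rw [Finset.sum_congr rfl (fun t _ => hterm t), ← TensorProduct.sum_tmul]
    congr 1
    apply Subtype.ext
    push_cast
    simp only [coe_gsmul]
    have hxs : ∑ t, a t * (x:A) * b t = (∑ t, a t * b t) * (x:A) := by
      rw [Finset.sum_mul]; exact Finset.sum_congr rfl fun t _ => by ring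
    rw [hxs, ← hsum, one_mul]
  constructor
  · -- injective
    have hgf : ∀ z, g ((gradedMulMap 𝒜 k l) z) = z := by
      have : g.comp (gradedMulMap 𝒜 k l) = LinearMap.id := TensorProduct.ext' key
      intro z
      simpa using LinearMap.congr_fun this z
    intro z w hzw
    rw [← hgf z, ← hgf w, hzw]
  · -- surjective
    intro x
    have hx : (x : A) ∈ 𝒜 k * 𝒜 l := by rw [hfull]; exact x.2
    obtain ⟨m, c, d, hc, hd, hsum'⟩ := exists_fin_sum_of_mem_mul hx
    refine ⟨∑ t, (⟨c t, hc t⟩ : 𝒜 k) ⊗ₜ[R] (⟨d t, hd t⟩ : 𝒜 l), ?_⟩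
    apply Subtype.ext
    rw [map_sum, AddSubmonoidClass.coe_finset_sum]
    exact (Finset.sum_congr rfl fun i _ => rfl).trans hsum'.symm

lemma gmul4_le (a b c d : ZMod p) :
    (𝒜 a * 𝒜 b) * (𝒜 c * 𝒜 d) ≤ 𝒜 (a + c) * 𝒜 (b + d) := by
  rw [mul_mul_mul_comm]
  exact mul_le_mul' (gmul_le 𝒜 a c) (gmul_le 𝒜 b d)

lemma mem_finset_sum_submodule {ι : Type*} [DecidableEq ι] {s : Finset ι}
    {M : ι → Submodule ℤ A} {x : A} (hx : x ∈ ∑ i ∈ s, M i) :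
    ∃ f : ι → A, (∀ i ∈ s, f i ∈ M i) ∧ x = ∑ i ∈ s, f i := by
  induction s using Finset.induction_on generalizing x with
  | empty =>
    refine ⟨fun _ => 0, by simp, ?_⟩
    simpa using hx
  | insert a s hni ih =>
    rw [Finset.sum_insert hni, Submodule.add_eq_sup, Submodule.mem_sup] at hx
    obtain ⟨y, hy, z, hz, rfl⟩ := hx
    obtain ⟨f, hf, rfl⟩ := ih hz
    refine ⟨Function.update f a y, ?_, ?_⟩
    · intro i hi
      rcases Finset.mem_insert.1 hi with rfl | hi2
      · simpa using hy
      · have hne : i ≠ a := by rintro rfl; exact hni hi2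
        simpa [Function.update_of_ne hne] using hf i hi2
    · rw [Finset.sum_insert hni, Function.update_self]
      congr 1
      refine Finset.sum_congr rfl fun i hi => ?_
      have hne : i ≠ a := by rintro rfl; exact hni hi
      exact (Function.update_of_ne hne _ _).symm

lemma ghard (hp : p.Prime)
    (h : ∑ i ∈ Finset.Icc 1 (p-1), 𝒜 (i : ZMod p) * 𝒜 ((p - i : ℕ) : ZMod p)
        = 𝒜 (0 : ZMod p)) :
    (1:A) ∈ 𝒜 (1 : ZMod p) * 𝒜 (-1 : ZMod p) := by
  haveI : Fact p.Prime := ⟨hp⟩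
  by_contra hW
  -- the ideals J i of the degree-zero subring
  let J : ZMod p → Ideal ↥(𝒜 (0 : ZMod p)) := fun i => Submodule.mk
    (toAddSubmonoid := AddSubmonoid.mk
      (toAddSubsemigroup := AddSubsemigroup.mk
        {x | (x : A) ∈ 𝒜 i * 𝒜 (-i)}
        (fun {a b} hx hy => by
          show ((a + b : ↥(𝒜 (0:ZMod p))) : A) ∈ 𝒜 i * 𝒜 (-i)
          push_cast
          exact add_mem hx hy))
      (by
        show ((0 : ↥(𝒜 (0:ZMod p))) : A) ∈ 𝒜 i * 𝒜 (-i)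
        simpa using zero_mem (𝒜 i * 𝒜 (-i))))
    (fun r {x} hx => by
      have hmm : (r : A) * (x : A) ∈ 𝒜 (0:ZMod p) * (𝒜 i * 𝒜 (-i)) :=
        Submodule.mul_mem_mul r.2 hx
      have hle : 𝒜 (0:ZMod p) * (𝒜 i * 𝒜 (-i)) ≤ 𝒜 i * 𝒜 (-i) := by
        rw [← mul_assoc]
        refine mul_le_mul' ?_ le_rfl
        have := gmul_le 𝒜 (0:ZMod p) i
        rwa [zero_add] at this
      exact hle hmm)
  have hJmul : ∀ i j : ZMod p, J i * J j ≤ J (i + j) := by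
    intro i j
    rw [Submodule.mul_le]
    intro x hx y hy
    show ((x * y : ↥(𝒜 (0:ZMod p))) : A) ∈ 𝒜 (i+j) * 𝒜 (-(i+j))
    have hc : ((x * y : ↥(𝒜 (0:ZMod p))) : A) = (x:A) * (y:A) := rfl
    rw [hc, neg_add]
    exact gmul4_le 𝒜 i (-i) j (-j) (Submodule.mul_mem_mul hx hy)
  have hJpow : ∀ (i : ZMod p) (n : ℕ), J i ^ (n+1) ≤ J (((n+1:ℕ):ZMod p) * i) := by
    intro i n
    induction n with
    | zero => simpa using le_rfl
    | succ n ih =>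
      rw [pow_succ]
      refine le_trans (Ideal.mul_mono ih le_rfl) ?_
      refine le_trans (hJmul _ _) ?_
      have harith : ((n+1:ℕ):ZMod p) * i + i = ((n+1+1:ℕ):ZMod p) * i := by push_cast; ring
      rw [harith]
  have hJ1 : J 1 ≠ ⊤ := by
    intro htop
    apply hW
    have h1J : (1 : ↥(𝒜 (0:ZMod p))) ∈ J 1 := htop ▸ Submodule.mem_top
    have : ((1 : ↥(𝒜 (0:ZMod p))) : A) ∈ 𝒜 (1:ZMod p) * 𝒜 (-(1:ZMod p)) := h1J
    simpa using this
  obtain ⟨m, hmmax, hmle⟩ := Ideal.exists_le_maximal _ hJ1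
  have hJm : ∀ ii ∈ Finset.Icc 1 (p-1), J ((ii:ℕ):ZMod p) ≤ m := by
    intro ii hii
    rw [Finset.mem_Icc] at hii
    have hple : 2 ≤ p := hp.two_le
    have hii0 : ((ii:ℕ):ZMod p) ≠ 0 := by
      rw [Ne, ZMod.natCast_eq_zero_iff]
      intro hdvd
      have := Nat.le_of_dvd (by omega) hdvd
      omega
    obtain ⟨n, hn⟩ : ∃ n:ℕ, ((n+1:ℕ):ZMod p) * ((ii:ℕ):ZMod p) = 1 := by
      have hinv : ((ii:ℕ):ZMod p)⁻¹ ≠ 0 := inv_ne_zero hii0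
      refine ⟨(((ii:ℕ):ZMod p)⁻¹).val - 1, ?_⟩
      have h1le : 1 ≤ (((ii:ℕ):ZMod p)⁻¹).val :=
        Nat.one_le_iff_ne_zero.2 (by simpa [ZMod.val_eq_zero] using hinv)
      rw [Nat.sub_add_cancel h1le, ZMod.natCast_val, ZMod.cast_id,
        inv_mul_cancel₀ hii0]
    intro x hx
    have hpow : x ^ (n+1) ∈ J ((ii:ℕ):ZMod p) ^ (n+1) := Ideal.pow_mem_pow hx _
    have hx1 : x ^ (n+1) ∈ J 1 := by
      have := hJpow ((ii:ℕ):ZMod p) n hpow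
      rwa [hn] at this
    exact hmmax.isPrime.mem_of_pow_mem _ (hmle hx1)
  have h1mem : (1:A) ∈ ∑ i ∈ Finset.Icc 1 (p-1), 𝒜 (i:ZMod p) * 𝒜 ((p-i:ℕ):ZMod p) := by
    rw [h]; exact gone_mem 𝒜
  obtain ⟨f, hf, hfe⟩ := mem_finset_sum_submodule h1mem
  have hfmem : ∀ ii ∈ Finset.Icc 1 (p-1),
      f ii ∈ 𝒜 ((ii:ℕ):ZMod p) * 𝒜 (-((ii:ℕ):ZMod p)) := by
    intro ii hii
    have h1 := hf ii hii
    rw [Finset.mem_Icc] at hii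
    have hple : 2 ≤ p := hp.two_le
    rwa [gcast_sub (by omega : ii ≤ p)] at h1
  have hfmem0 : ∀ ii ∈ Finset.Icc 1 (p-1), f ii ∈ 𝒜 (0:ZMod p) := by
    intro ii hii
    have hle : 𝒜 ((ii:ℕ):ZMod p) * 𝒜 (-((ii:ℕ):ZMod p)) ≤ 𝒜 (0:ZMod p) := by
      have := gmul_le 𝒜 ((ii:ℕ):ZMod p) (-((ii:ℕ):ZMod p))
      rwa [add_neg_cancel] at this
    exact hle (hfmem ii hii)
  classical
  let F : ℕ → ↥(𝒜 (0:ZMod p)) := fun ii =>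
    if hii : ii ∈ Finset.Icc 1 (p-1) then ⟨f ii, hfmem0 ii hii⟩ else 0
  have hFm : ∀ ii ∈ Finset.Icc 1 (p-1), F ii ∈ m := by
    intro ii hii
    have hFJ : F ii ∈ J ((ii:ℕ):ZMod p) := by
      show ((F ii : ↥(𝒜 (0:ZMod p))) : A) ∈ 𝒜 ((ii:ℕ):ZMod p) * 𝒜 (-((ii:ℕ):ZMod p))
      have : F ii = ⟨f ii, hfmem0 ii hii⟩ := dif_pos hii
      rw [this]
      exact hfmem ii hii
    exact hJm ii hii hFJ
  have hsumF : (∑ ii ∈ Finset.Icc 1 (p-1), F ii) = (1 : ↥(𝒜 (0:ZMod p))) := by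
    apply Subtype.ext
    rw [AddSubmonoidClass.coe_finset_sum]
    have hco : ((1 : ↥(𝒜 (0:ZMod p))) : A) = 1 := rfl
    rw [hco, hfe]
    refine Finset.sum_congr rfl fun ii hii => ?_
    have : F ii = ⟨f ii, hfmem0 ii hii⟩ := dif_pos hii
    rw [this]
  have hone : (1 : ↥(𝒜 (0:ZMod p))) ∈ m := by
    rw [← hsumF]
    exact Ideal.sum_mem m hFm
  exact hmmax.ne_top (Ideal.eq_top_of_isUnit_mem m hone isUnit_one)
end Aux

/-- For a `ℤ/pℤ`-graded commutative ring `A` with components `𝒜 i`, the following are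
equivalent: (1) `Σ_{i=1}^{p-1} 𝒜 i · 𝒜 (p-i) = 𝒜 0`; (2) `(𝒜 i)^p = 𝒜 0` for all
`i = 1, …, p-1`; (3) `(𝒜 1)^p = 𝒜 0`; (4) `𝒜 i · 𝒜 (p-i) = 𝒜 0` for each `i = 1, …, p-1`;
(5) the multiplication map `𝒜 k ⊗[𝒜 0] 𝒜 l → 𝒜 (k+l)` is bijective for all `k, l`. -/
theorem graded_torsor_tfae
    {A : Type*} [CommRing A] {p : ℕ} (hp : p.Prime)
    (𝒜 : ZMod p → Submodule ℤ A) [GradedRing 𝒜] :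
    List.TFAE
      [∑ i ∈ Finset.Icc 1 (p - 1), 𝒜 (i : ZMod p) * 𝒜 ((p - i : ℕ) : ZMod p)
          = 𝒜 (0 : ZMod p),
        ∀ i ∈ Finset.Icc 1 (p - 1), 𝒜 (i : ZMod p) ^ p = 𝒜 (0 : ZMod p),
        𝒜 (1 : ZMod p) ^ p = 𝒜 (0 : ZMod p),
        ∀ i ∈ Finset.Icc 1 (p - 1),
          𝒜 (i : ZMod p) * 𝒜 ((p - i : ℕ) : ZMod p) = 𝒜 (0 : ZMod p),
        ∀ k l : ZMod p, Function.Bijective (gradedMulMap 𝒜 k l)] := by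
  haveI : Fact p.Prime := ⟨hp⟩
  have hp2 : 2 ≤ p := hp.two_le
  have hfullW : (1:A) ∈ 𝒜 (1:ZMod p) * 𝒜 (-1:ZMod p) →
      ∀ j k : ZMod p, 𝒜 j * 𝒜 k = 𝒜 (j+k) := fun hw => gfull 𝒜 hp one_ne_zero hw
  have hcast : ∀ ii : ℕ, 1 ≤ ii → ii ≤ p - 1 →
      ((p - ii : ℕ) : ZMod p) = -((ii:ℕ) : ZMod p) :=
    fun ii h1 h2 => gcast_sub (p := p) (by omega)
  have h1memIcc : (1:ℕ) ∈ Finset.Icc 1 (p-1) := Finset.mem_Icc.2 ⟨le_rfl, by omega⟩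
  have W4 : (1:A) ∈ 𝒜 (1:ZMod p) * 𝒜 (-1:ZMod p) →
      ∀ i ∈ Finset.Icc 1 (p-1),
        𝒜 (i:ZMod p) * 𝒜 ((p-i:ℕ):ZMod p) = 𝒜 (0:ZMod p) := by
    intro hw i hi
    rw [Finset.mem_Icc] at hi
    rw [hcast i hi.1 hi.2, hfullW hw, add_neg_cancel]
  have W1 : (1:A) ∈ 𝒜 (1:ZMod p) * 𝒜 (-1:ZMod p) →
      ∑ i ∈ Finset.Icc 1 (p - 1), 𝒜 (i : ZMod p) * 𝒜 ((p - i : ℕ) : ZMod p)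
        = 𝒜 (0 : ZMod p) := by
    intro hw
    rw [Finset.sum_congr rfl (W4 hw)]
    exact gsum_const 𝒜 _ ⟨1, h1memIcc⟩
  have W2 : (1:A) ∈ 𝒜 (1:ZMod p) * 𝒜 (-1:ZMod p) →
      ∀ i ∈ Finset.Icc 1 (p-1), 𝒜 (i:ZMod p) ^ p = 𝒜 (0:ZMod p) := by
    intro hw i hi
    obtain ⟨n, hn⟩ : ∃ n:ℕ, n + 1 = p := ⟨p-1, by omega⟩
    have hpe := gpow_eq 𝒜 (hfullW hw) ((i:ℕ):ZMod p) n
    rw [hn] at hpe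
    rw [hpe, ZMod.natCast_self, zero_mul]
  have W3 : (1:A) ∈ 𝒜 (1:ZMod p) * 𝒜 (-1:ZMod p) →
      𝒜 (1 : ZMod p) ^ p = 𝒜 (0 : ZMod p) := by
    intro hw
    have := W2 hw 1 h1memIcc
    simpa using this
  have W5 : (1:A) ∈ 𝒜 (1:ZMod p) * 𝒜 (-1:ZMod p) →
      ∀ k l : ZMod p, Function.Bijective (gradedMulMap 𝒜 k l) :=
    fun hw k l => gbij 𝒜 (hfullW hw) k l
  have h1W := ghard 𝒜 hp
  have h3W : 𝒜 (1 : ZMod p) ^ p = 𝒜 (0 : ZMod p) →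
      (1:A) ∈ 𝒜 (1:ZMod p) * 𝒜 (-1:ZMod p) := by
    intro h3
    obtain ⟨n, hn⟩ : ∃ n:ℕ, n + 1 = p := ⟨p-1, by omega⟩
    obtain ⟨m, hm⟩ : ∃ m:ℕ, m + 1 = n := ⟨n-1, by omega⟩
    have hle2 : 𝒜 (1:ZMod p) ^ n ≤ 𝒜 (-1:ZMod p) := by
      have h1 := gpow_le 𝒜 (1:ZMod p) m
      rw [hm] at h1
      have hc : ((n:ℕ):ZMod p) * 1 = (-1:ZMod p) := by
        rw [mul_one]
        have h2 := gcast_sub (p := p) (i := 1) (by omega)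
        rw [show p - 1 = n from by omega] at h2
        simpa using h2
      rwa [hc] at h1
    have hfin : 𝒜 (0:ZMod p) ≤ 𝒜 (1:ZMod p) * 𝒜 (-1:ZMod p) := by
      rw [← h3]
      calc 𝒜 (1:ZMod p) ^ p = 𝒜 (1:ZMod p)^(n+1) := by rw [hn]
        _ = 𝒜 (1:ZMod p) * 𝒜 (1:ZMod p)^n := pow_succ' _ _
        _ ≤ 𝒜 (1:ZMod p) * 𝒜 (-1:ZMod p) := mul_le_mul' le_rfl hle2
    exact hfin (gone_mem 𝒜)
  have h2W : (∀ i ∈ Finset.Icc 1 (p-1), 𝒜 (i:ZMod p) ^ p = 𝒜 (0:ZMod p)) →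
      (1:A) ∈ 𝒜 (1:ZMod p) * 𝒜 (-1:ZMod p) := by
    intro h2
    refine h3W ?_
    have := h2 1 h1memIcc
    simpa using this
  have h4W : (∀ i ∈ Finset.Icc 1 (p-1),
        𝒜 (i:ZMod p) * 𝒜 ((p-i:ℕ):ZMod p) = 𝒜 (0:ZMod p)) →
      (1:A) ∈ 𝒜 (1:ZMod p) * 𝒜 (-1:ZMod p) := by
    intro h4
    have h41 := h4 1 h1memIcc
    rw [hcast 1 le_rfl (by omega)] at h41
    have h41' : 𝒜 (1:ZMod p) * 𝒜 (-1:ZMod p) = 𝒜 (0:ZMod p) := by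
      simpa using h41
    rw [h41']
    exact gone_mem 𝒜
  have h5W : (∀ k l : ZMod p, Function.Bijective (gradedMulMap 𝒜 k l)) →
      (1:A) ∈ 𝒜 (1:ZMod p) * 𝒜 (-1:ZMod p) := by
    intro h5
    obtain ⟨t, ht⟩ := (h5 1 (-1)).2
      (⟨1, by rw [add_neg_cancel]; exact gone_mem 𝒜⟩ : 𝒜 ((1:ZMod p) + -1))
    have hrange : ∀ z : (𝒜 (1:ZMod p)) ⊗[↥(𝒜 (0:ZMod p))] (𝒜 (-1:ZMod p)),
        ((gradedMulMap 𝒜 1 (-1) z : 𝒜 ((1:ZMod p) + -1)) : A)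
          ∈ 𝒜 (1:ZMod p) * 𝒜 (-1:ZMod p) := by
      intro z
      induction z using TensorProduct.induction_on with
      | zero => simpa using zero_mem _
      | tmul x y => exact Submodule.mul_mem_mul x.2 y.2
      | add x y hx hy =>
        rw [map_add]
        push_cast
        exact add_mem hx hy
    have hmem1 := hrange t
    rw [ht] at hmem1
    simpa using hmem1
  tfae_have 1 → 2 := fun h => W2 (h1W h)
  tfae_have 2 → 3 := fun h => W3 (h2W h)
  tfae_have 3 → 4 := fun h => W4 (h3W h)
  tfae_have 4 → 5 := fun h => W5 (h4W h)
  tfae_have 5 → 1 := fun h => W1 (h5W h)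
  tfae_finish
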